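/- Let $k \ge 2$ and let $F$ be a $3$-uniform hypergraph on $n$ vertices such that no $k$ edges of $F$ span at most $k+2$ vertices (i.e., $F$ is $(k+2,k)$-free). Then $F$ has at most $\frac{k}{6} n^2$ edges. -/

import Mathlib

open Finset

/-- If `F` is a `(k+2,k)`-free 3-uniform hypergraph on `n` vertices
(no `k` distinct edges span at most `k+2` vertices), then `F` has at most `k/6 * n^2` edges. -/
theorem brown_erdos_sos_trivial_bound {V : Type*} [Fintype V] [DecidableEq V]
    (k : ℕ) (hk : 2 ≤ k) (F : Finset (Finset V)) (h3 : ∀ e ∈ F, e.card = 3)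
    (hfree : ∀ S ⊆ F, S.card = k → k + 2 < (S.sup id).card) :
    (F.card : ℝ) ≤ (k : ℝ) / 6 * (Fintype.card V : ℝ) ^ 2 := by
  classical
  set n := Fintype.card V with hn
  set P := (univ : Finset V).powersetCard 2 with hP
  -- each pair lies in fewer than k edges
  have hdeg : ∀ p ∈ P, (F.filter (fun e => p ⊆ e)).card < k := by
    intro p hp
    have hpcard : p.card = 2 := (Finset.mem_powersetCard.mp hp).2
    by_contra h
    push_neg at h
    obtain ⟨S, hSsub, hScard⟩ := Finset.exists_subset_card_eq h
    have hSF : S ⊆ F := hSsub.trans (Finset.filter_subset _ _)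
    have hbig := hfree S hSF hScard
    have hsub : S.sup id ⊆ p ∪ S.biUnion (fun e => e \ p) := by
      intro x hx
      rw [Finset.mem_sup] at hx
      obtain ⟨e, heS, hxe⟩ := hx
      by_cases hxp : x ∈ p
      · exact Finset.mem_union_left _ hxp
      · exact Finset.mem_union_right _ (Finset.mem_biUnion.mpr ⟨e, heS,
          Finset.mem_sdiff.mpr ⟨hxe, hxp⟩⟩)
    have hone : ∀ e ∈ S, (e \ p).card = 1 := by
      intro e heS
      have hmem := hSsub heS
      rw [Finset.mem_filter] at hmem
      rw [Finset.card_sdiff_of_subset hmem.2, h3 e hmem.1, hpcard]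
    have hcard : (S.sup id).card ≤ k + 2 := by
      calc (S.sup id).card ≤ (p ∪ S.biUnion (fun e => e \ p)).card :=
            Finset.card_le_card hsub
        _ ≤ p.card + (S.biUnion (fun e => e \ p)).card := Finset.card_union_le _ _
        _ ≤ p.card + ∑ e ∈ S, (e \ p).card :=
            Nat.add_le_add_left (Finset.card_biUnion_le) _
        _ = 2 + ∑ e ∈ S, 1 := by
            rw [hpcard, Finset.sum_congr rfl hone]
        _ = k + 2 := by rw [Finset.sum_const, hScard]; ring
    omega
  -- double counting
  have hcnt : ∑ e ∈ F, (P.filter (fun p => p ⊆ e)).card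
      = ∑ p ∈ P, (F.filter (fun e => p ⊆ e)).card := by
    simp_rw [Finset.card_filter]
    rw [Finset.sum_comm]
  have hthree : ∀ e ∈ F, (P.filter (fun p => p ⊆ e)).card = 3 := by
    intro e he
    have : P.filter (fun p => p ⊆ e) = e.powersetCard 2 := by
      ext p
      simp [hP, Finset.mem_powersetCard, Finset.mem_filter, and_comm]
    rw [this, Finset.card_powersetCard, h3 e he]
    decide
  have hPcard : P.card = n.choose 2 := by
    rw [hP, Finset.card_powersetCard, Finset.card_univ]
  have hmain : 3 * F.card ≤ (k - 1) * n.choose 2 := by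
    calc 3 * F.card = ∑ e ∈ F, (P.filter (fun p => p ⊆ e)).card := by
          rw [Finset.sum_congr rfl hthree, Finset.sum_const, smul_eq_mul, mul_comm]
      _ = ∑ p ∈ P, (F.filter (fun e => p ⊆ e)).card := hcnt
      _ ≤ ∑ p ∈ P, (k - 1) := Finset.sum_le_sum (fun p hp => by
          have := hdeg p hp; omega)
      _ = (k - 1) * n.choose 2 := by rw [Finset.sum_const, smul_eq_mul, mul_comm, hPcard]
  -- arithmetic
  have hchoose : 2 * n.choose 2 = n * (n - 1) := by
    rw [Nat.choose_two_right]
    rcases Nat.eq_zero_or_pos n with h0 | h0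
    · simp [h0]
    · have : 2 ∣ n * (n - 1) := by
        rcases Nat.even_or_odd n with he | ho
        · exact Dvd.dvd.mul_right he.two_dvd _
        · exact Dvd.dvd.mul_left (Nat.Odd.sub_odd ho odd_one).two_dvd _
      omega
  have hnat : 6 * F.card ≤ k * n ^ 2 := by
    have h1 : 6 * F.card ≤ (k - 1) * (2 * n.choose 2) := by
      calc 6 * F.card = 2 * (3 * F.card) := by ring
        _ ≤ 2 * ((k - 1) * n.choose 2) := Nat.mul_le_mul_left _ hmain
        _ = (k - 1) * (2 * n.choose 2) := by ring
    rw [hchoose] at h1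
    calc 6 * F.card ≤ (k - 1) * (n * (n - 1)) := h1
      _ ≤ k * (n * n) := Nat.mul_le_mul (Nat.sub_le _ _)
          (Nat.mul_le_mul_left _ (Nat.sub_le _ _))
      _ = k * n ^ 2 := by ring
  have := (Nat.cast_le (α := ℝ)).mpr hnat
  push_cast at this
  linarith
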